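/- arXiv:1505.03738 — 5 statements merged into one kernel-verified Lean document; each statement's English description precedes it below -/
import Mathlib

section
/- For every complex x, every finite multiset F of resting sets such that Fate(x, F) holds, and every finite multiset B of complexes with B ~ F, there exists a fast transition from the singleton multiset {x} to B. -/
/-- A reaction: a pair (reactants, products) of finite multisets of complexes. -/
abbrev Rxn (C : Type*) := Multiset C × Multiset C

variable {C : Type*}

/-- Edge of the fast-reaction digraph Γ: a fast (1,1) reaction ({x}, {y}) in R. -/
def FastEdge (R : Set (Rxn C)) (x y : C) : Prop :=
  ((({x} : Multiset C), ({y} : Multiset C)) : Rxn C) ∈ R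

/-- Reachability along Γ. -/
def Reach (R : Set (Rxn C)) : C → C → Prop :=
  Relation.ReflTransGen (FastEdge R)

/-- The strongly connected component of Γ containing x. -/
def scc (R : Set (Rxn C)) (x : C) : Set C :=
  {y | Reach R x y ∧ Reach R y x}

/-- Q is a resting set: an SCC of Γ all of whose outgoing fast reactions stay in Q. -/
def IsRestingSet (R : Set (Rxn C)) (Q : Set C) : Prop :=
  (∃ x, Q = scc R x) ∧
    ∀ r ∈ R, r.1.card = 1 → (∀ a ∈ r.1, a ∈ Q) → ∀ b ∈ r.2, b ∈ Q

/-- x is a resting complex: a member of some resting set. -/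
def RestingComplex (R : Set (Rxn C)) (x : C) : Prop :=
  ∃ Q, IsRestingSet R Q ∧ x ∈ Q

/-- One step of a fast transition: replace one occurrence of x by the products of a
fast reaction ({x}, P) ∈ R. -/
def FastStep (R : Set (Rxn C)) (M N : Multiset C) : Prop :=
  ∃ (x : C) (P M' : Multiset C),
    ((({x} : Multiset C), P) : Rxn C) ∈ R ∧ M = x ::ₘ M' ∧ N = P + M'

/-- A fast transition: finitely many fast steps. -/
def FastTransition (R : Set (Rxn C)) : Multiset C → Multiset C → Prop :=
  Relation.ReflTransGen (FastStep R)

/-- The fate predicate Fate(x, F), for x a complex and F a finite multiset of resting sets. -/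
inductive Fate (R : Set (Rxn C)) : C → Multiset (Set C) → Prop
  | resting (x : C) (h : IsRestingSet R (scc R x)) :
      Fate R x {scc R x}
  | step (x a : C) (l : List (C × Multiset (Set C)))
      (hnr : ¬ IsRestingSet R (scc R x))
      (ha : a ∈ scc R x)
      (hr : ((({a} : Multiset C), (↑(l.map Prod.fst) : Multiset C)) : Rxn C) ∈ R)
      (hout : ∃ b ∈ l.map Prod.fst, b ∉ scc R x)
      (hf : ∀ p ∈ l, Fate R p.1 p.2) :
      Fate R x (l.map Prod.snd).sum

/-- B ~ F : the multiset B of complexes represents the multiset F of resting sets,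
i.e. there is a bijective matching pairing each b ∈ B with a Q ∈ F with b ∈ Q. -/
def Represents (B : Multiset C) (F : Multiset (Set C)) : Prop :=
  Multiset.Rel (fun b Q => b ∈ Q) B F

/-- F is a fate of the multiset P of complexes: F = F_1 + ... + F_n where
P = {b_1, ..., b_n} and Fate(b_i, F_i) for each i. -/
def FateM (R : Set (Rxn C)) (P : Multiset C) (F : Multiset (Set C)) : Prop :=
  ∃ l : List (C × Multiset (Set C)),
    P = (↑(l.map Prod.fst) : Multiset C) ∧
    F = (l.map Prod.snd).sum ∧
    ∀ p ∈ l, Fate R p.1 p.2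

/-- The condensed reactions: for each slow reaction ({a₁, a₂}, P) ∈ R and each fate F
of P, the condensed reaction ({SCC(a₁), SCC(a₂)}, F). -/
def IsCondensed (R : Set (Rxn C)) (Ahat Bhat : Multiset (Set C)) : Prop :=
  ∃ (a1 a2 : C) (P : Multiset C),
    ((({a1, a2} : Multiset C), P) : Rxn C) ∈ R ∧
    Ahat = ({scc R a1, scc R a2} : Multiset (Set C)) ∧
    FateM R P Bhat

/-- Every reaction in R is fast (unimolecular) or slow (bimolecular). -/
def FastOrSlow (R : Set (Rxn C)) : Prop :=
  ∀ r ∈ R, r.1.card = 1 ∨ r.1.card = 2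

/-- Reactants and products of every reaction are nonempty. -/
def NonemptyRxns (R : Set (Rxn C)) : Prop :=
  ∀ r ∈ R, r.1 ≠ 0 ∧ r.2 ≠ 0

/-- Property 3: every finite cyclic sequence of fast reactions, in which each reaction
consumes a product of the previous one (cyclically), consists of (1,1) reactions only. -/
def Prop3 (R : Set (Rxn C)) : Prop :=
  ∀ (n : ℕ) (hn : 0 < n) (r : Fin n → Rxn C),
    (∀ i, r i ∈ R ∧ (r i).1.card = 1) →
    (∀ i : Fin n, ∀ a ∈ (r ⟨(i.1 + 1) % n, Nat.mod_lt _ hn⟩).1, a ∈ (r i).2) →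
    ∀ i, (r i).2.card = 1

/-- Property 4: both reactants of every slow reaction are resting complexes. -/
def Prop4 (R : Set (Rxn C)) : Prop :=
  ∀ r ∈ R, r.1.card = 2 → ∀ a ∈ r.1, RestingComplex R a

/-- A resting-state transition from {a₁, a₂} to B: a slow reaction ({a₁, a₂}, P) ∈ R
followed by a fast transition from P to B. -/
def RestingTransition (R : Set (Rxn C)) (a1 a2 : C) (B : Multiset C) : Prop :=
  ∃ P : Multiset C, ((({a1, a2} : Multiset C), P) : Rxn C) ∈ R ∧ FastTransition R P B

/-- One step of a sequence of detailed reactions: remove the reactants of some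
reaction in R from the current multiset and add its products. -/
def DetailedStep (R : Set (Rxn C)) (M N : Multiset C) : Prop :=
  ∃ r ∈ R, ∃ M' : Multiset C, M = r.1 + M' ∧ N = r.2 + M'

/-- One step of a sequence of condensed reactions: remove the reactant multiset of a
condensed reaction from the current multiset of resting sets and add its products. -/
def CondensedStep (R : Set (Rxn C)) (M N : Multiset (Set C)) : Prop :=
  ∃ Ahat Bhat M' : Multiset (Set C),
    IsCondensed R Ahat Bhat ∧ M = Ahat + M' ∧ N = Bhat + M'

lemma FastStep.add_right' {R : Set (Rxn C)} {M N : Multiset C}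
    (h : FastStep R M N) (K : Multiset C) : FastStep R (M + K) (N + K) := by
  obtain ⟨x, P, M', hr, hM, hN⟩ := h
  exact ⟨x, P, M' + K, hr, by simp [hM, Multiset.cons_add],
    by simp [hN, add_assoc]⟩

lemma FastTransition.add_right' {R : Set (Rxn C)} {M N : Multiset C}
    (h : FastTransition R M N) (K : Multiset C) :
    FastTransition R (M + K) (N + K) := by
  induction h with
  | refl => exact Relation.ReflTransGen.refl
  | tail _ hstep ih => exact ih.tail (hstep.add_right' K)

lemma FastTransition.parallel' {R : Set (Rxn C)} {M1 N1 M2 N2 : Multiset C}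
    (h1 : FastTransition R M1 N1) (h2 : FastTransition R M2 N2) :
    FastTransition R (M1 + M2) (N1 + N2) := by
  have a := h1.add_right' M2
  have b := h2.add_right' N1
  rw [add_comm M2 N1, add_comm N2 N1] at b
  exact a.trans b

lemma reach_to_transition {R : Set (Rxn C)} {x b : C}
    (h : Reach R x b) : FastTransition R ({x} : Multiset C) ({b} : Multiset C) := by
  induction h with
  | refl => exact Relation.ReflTransGen.refl
  | tail _ he ih =>
      exact ih.tail ⟨_, {_}, 0, he, by simp, by simp⟩

/-- Lemma 1 (Fates map to fast transitions): for every complex x, every fate F of x,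
and every multiset B of complexes with B ~ F, there is a fast transition {x} → B. -/
theorem fate_to_fast_transition {C : Type*} [Fintype C] (R : Set (Rxn C))
    (hRfin : R.Finite) (hne : NonemptyRxns R) (hfs : FastOrSlow R)
    (x : C) (F : Multiset (Set C)) (hF : Fate R x F)
    (B : Multiset C) (hB : Represents B F) :
    FastTransition R ({x} : Multiset C) B := by
  induction hF generalizing B with
  | resting y h =>
      rw [Represents, show ({scc R _} : Multiset (Set C)) = _ ::ₘ 0 from rfl, Multiset.rel_cons_right] at hB
      obtain ⟨b, B0, hbQ, hB0, rfl⟩ := hB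
      rw [Multiset.rel_zero_right] at hB0
      subst hB0
      exact reach_to_transition hbQ.1
  | step y a l hnr ha hr hout hf ih =>
      have h1 : FastTransition R ({y} : Multiset C) ({a} : Multiset C) :=
        reach_to_transition ha.1
      have h2 : FastStep R ({a} : Multiset C) (↑(l.map Prod.fst) : Multiset C) :=
        ⟨a, _, 0, hr, by simp, by simp⟩
      refine (h1.tail h2).trans ?_
      clear h1 h2 hr hout hnr ha
      induction l generalizing B with
      | nil =>
          rw [Represents, List.map_nil, List.sum_nil, Multiset.rel_zero_right] at hB
          subst hB
          exact Relation.ReflTransGen.refl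
      | cons p t iht =>
          rw [Represents, List.map_cons, List.sum_cons] at hB
          obtain ⟨B1, B2, hB1, hB2, rfl⟩ := Multiset.rel_add_right.mp hB
          have t1 := ih p (by simp) B1 hB1
          have t2 := iht (fun q hq => hf q (List.mem_cons_of_mem _ hq))
            (fun q hq => ih q (List.mem_cons_of_mem _ hq)) B2 hB2
          have hsplit : (↑((p :: t).map Prod.fst) : Multiset C)
              = ({p.1} : Multiset C) + ↑(t.map Prod.fst) := by
            simp
          rw [hsplit]
          exact t1.parallel' t2
end

section
/- For every condensed reaction (Â, B̂) of the condensed reaction network, there exist resting complexes a_1, a_2 with {SCC(a_1), SCC(a_2)} = Â and a slow reaction ({a_1, a_2}, P) in R such that for every finite multiset B of complexes with B ~ B̂ there is a fast transition from P to B; consequently, for every such B there is a resting-state transition from {a_1, a_2} to B. -/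
variable {C : Type*}

section Aux
variable {C : Type*}

theorem fastStep_add {R : Set (Rxn C)} {M N : Multiset C} (K : Multiset C)
    (h : FastStep R M N) : FastStep R (M + K) (N + K) := by
  obtain ⟨x, P, M', hr, rfl, rfl⟩ := h
  exact ⟨x, P, M' + K, hr, by rw [Multiset.cons_add], by rw [add_assoc]⟩

theorem fastTrans_add_right {R : Set (Rxn C)} {M N : Multiset C} (K : Multiset C)
    (h : FastTransition R M N) : FastTransition R (M + K) (N + K) := by
  induction h with
  | refl => exact Relation.ReflTransGen.refl
  | tail _ hstep ih => exact ih.tail (fastStep_add K hstep)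

theorem fastTrans_add {R : Set (Rxn C)} {M M' N N' : Multiset C}
    (h1 : FastTransition R M M') (h2 : FastTransition R N N') :
    FastTransition R (M + N) (M' + N') := by
  refine (fastTrans_add_right N h1).trans ?_
  rw [add_comm M' N, add_comm M' N']
  exact fastTrans_add_right M' h2

theorem reach_fastTrans {R : Set (Rxn C)} {x y : C} (h : Reach R x y) :
    FastTransition R {x} {y} := by
  induction h with
  | refl => exact Relation.ReflTransGen.refl
  | tail _ hedge ih =>
    rename_i b c _
    exact ih.tail ⟨b, {c}, 0, hedge, by simp, by simp⟩

theorem fate_trans {R : Set (Rxn C)} {x : C} {F : Multiset (Set C)} (h : Fate R x F) :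
    ∀ B : Multiset C, Represents B F → FastTransition R {x} B := by
  induction h with
  | resting x hQ =>
    intro B hB
    rw [Represents, show ({scc R x} : Multiset (Set C)) = scc R x ::ₘ 0 from rfl,
      Multiset.rel_cons_right] at hB
    obtain ⟨b, B', hb, hB', rfl⟩ := hB
    rw [Multiset.rel_zero_right] at hB'
    subst hB'
    exact reach_fastTrans hb.1
  | step x a l hnr ha hr hout hf ih =>
    intro B hB
    -- decompose B along l
    have key : ∀ (l' : List (C × Multiset (Set C))),
        (∀ p ∈ l', ∀ B : Multiset C, Represents B p.2 → FastTransition R {p.1} B) →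
        ∀ B : Multiset C, Represents B (l'.map Prod.snd).sum →
        FastTransition R (↑(l'.map Prod.fst) : Multiset C) B := by
      intro l'
      induction l' with
      | nil =>
        intro _ B hB
        simp only [List.map_nil, List.sum_nil] at hB
        rw [Represents, Multiset.rel_zero_right] at hB
        subst hB
        exact Relation.ReflTransGen.refl
      | cons p t iht =>
        intro hIH B hB
        simp only [List.map_cons, List.sum_cons] at hB
        rw [Represents, Multiset.rel_add_right] at hB
        obtain ⟨B1, B2, h1, h2, rfl⟩ := hB
        have t1 := hIH p List.mem_cons_self B1 h1
        have t2 := iht (fun q hq => hIH q (List.mem_cons_of_mem p hq)) B2 h2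
        simpa using fastTrans_add t1 t2
    have step1 : FastTransition R {x} {a} := reach_fastTrans ha.1
    have step2 : FastStep R {a} (↑(l.map Prod.fst) : Multiset C) :=
      ⟨a, _, 0, hr, by simp, by simp⟩
    exact ((step1.tail step2).trans (key l ih B hB))
end Aux

/-- Theorem 1 (Condensed reactions map to detailed reactions). -/
theorem condensed_to_detailed {C : Type*} [Fintype C] (R : Set (Rxn C))
    (hRfin : R.Finite) (hne : NonemptyRxns R) (hfs : FastOrSlow R) (h4 : Prop4 R)
    (Ahat Bhat : Multiset (Set C)) (h : IsCondensed R Ahat Bhat) :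
    ∃ (a1 a2 : C) (P : Multiset C),
      RestingComplex R a1 ∧ RestingComplex R a2 ∧
      ({scc R a1, scc R a2} : Multiset (Set C)) = Ahat ∧
      ((({a1, a2} : Multiset C), P) : Rxn C) ∈ R ∧
      (∀ B : Multiset C, Represents B Bhat → FastTransition R P B) ∧
      (∀ B : Multiset C, Represents B Bhat → RestingTransition R a1 a2 B) := by
  obtain ⟨a1, a2, P, hr, hA, l, hP, hBhat, hf⟩ := h
  have hcard : (({a1, a2} : Multiset C)).card = 2 := rfl
  have hr1 : RestingComplex R a1 := h4 _ hr hcard a1 (by simp)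
  have hr2 : RestingComplex R a2 := h4 _ hr hcard a2 (by simp)
  have key : ∀ (l' : List (C × Multiset (Set C))), (∀ p ∈ l', Fate R p.1 p.2) →
      ∀ B : Multiset C, Represents B (l'.map Prod.snd).sum →
      FastTransition R (↑(l'.map Prod.fst) : Multiset C) B := by
    intro l'
    induction l' with
    | nil =>
      intro _ B hB
      simp only [List.map_nil, List.sum_nil] at hB
      rw [Represents, Multiset.rel_zero_right] at hB
      subst hB
      exact Relation.ReflTransGen.refl
    | cons p t iht =>
      intro hF B hB
      simp only [List.map_cons, List.sum_cons] at hB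
      rw [Represents, Multiset.rel_add_right] at hB
      obtain ⟨B1, B2, h1, h2, rfl⟩ := hB
      have t1 := fate_trans (hF p List.mem_cons_self) B1 h1
      have t2 := iht (fun q hq => hF q (List.mem_cons_of_mem p hq)) B2 h2
      simpa using fastTrans_add t1 t2
  have hfast : ∀ B : Multiset C, Represents B Bhat → FastTransition R P B := by
    subst hBhat hP
    exact key l hf
  exact ⟨a1, a2, P, hr1, hr2, hA.symm, hr, hfast,
    fun B hB => ⟨P, hr, hfast B hB⟩⟩
end

section
/- Assume Property 3. For every complex x and every fast transition from the singleton multiset {x} to a finite multiset B all of whose elements are resting complexes, there exists a finite multiset F of resting sets such that Fate(x, F) holds and B ~ F. -/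
variable {C : Type*}

section Aux

variable {C : Type*}

lemma scc_self (R : Set (Rxn C)) (x : C) : x ∈ scc R x :=
  ⟨Relation.ReflTransGen.refl, Relation.ReflTransGen.refl⟩

lemma scc_eq_of_mem {R : Set (Rxn C)} {x b : C} (h : b ∈ scc R x) :
    scc R b = scc R x := by
  obtain ⟨hxb, hbx⟩ := h
  ext y
  constructor
  · rintro ⟨h1, h2⟩
    exact ⟨hxb.trans h1, h2.trans hbx⟩
  · rintro ⟨h1, h2⟩
    exact ⟨hbx.trans h1, h2.trans hxb⟩

lemma fate_congr {R : Set (Rxn C)} {x y : C} (h : scc R x = scc R y)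
    {F : Multiset (Set C)} (hf : Fate R y F) : Fate R x F := by
  cases hf with
  | resting y hres =>
    rw [← h] at hres ⊢
    exact Fate.resting x hres
  | step y a l hnr ha hr hout hf' =>
    rw [← h] at hnr ha hout
    exact Fate.step x a l hnr ha hr hout hf'

lemma fate_resting_unique {R : Set (Rxn C)} {b : C} {F : Multiset (Set C)}
    (hres : IsRestingSet R (scc R b)) (hf : Fate R b F) : F = {scc R b} := by
  cases hf with
  | resting _ _ => rfl
  | step _ a l hnr _ _ _ _ => exact absurd hres hnr

/-- Property 3 key consequence: a fast reaction whose reactant is reachable from one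
of its products must be a (1,1) reaction. -/
lemma prop3_singleton {R : Set (Rxn C)} (h3 : Prop3 R) {x : C} {P : Multiset C}
    (hr : ((({x} : Multiset C), P) : Rxn C) ∈ R) {b : C} (hb : b ∈ P)
    (hreach : Reach R b x) : P = {b} := by
  obtain ⟨l, hchain, hlast⟩ := List.exists_isChain_cons_of_relationReflTransGen hreach
  set L : List C := b :: l with hL
  have hLchain : List.IsChain (FastEdge R) L := hchain
  have hn : 0 < L.length := by simp [hL]
  set n : ℕ := L.length with hndef
  have hlast' : L.get ⟨n - 1, by omega⟩ = x := by
    rw [List.getLast_eq_getElem (l := L) (by simp [hL])] at hlast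
    exact hlast
  set r : Fin n → Rxn C := fun i =>
    (({L.get ⟨i.1, i.2⟩} : Multiset C),
      if h : i.1 + 1 < n then ({L.get ⟨i.1 + 1, h⟩} : Multiset C) else P) with hrdef
  have h1 : ∀ i, r i ∈ R ∧ (r i).1.card = 1 := by
    intro i
    refine ⟨?_, by simp [hrdef]⟩
    simp only [hrdef]
    split_ifs with h
    · exact List.isChain_iff_getElem.mp hLchain i.1 (by omega)
    · have hi : i.1 = n - 1 := by omega
      have : L.get ⟨i.1, i.2⟩ = x := by
        rw [show (⟨i.1, i.2⟩ : Fin L.length) = ⟨n - 1, by omega⟩ from by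
          simp [Fin.ext_iff, hi]]
        exact hlast'
      rw [this]
      exact hr
  have h2 : ∀ i : Fin n, ∀ a ∈ (r ⟨(i.1 + 1) % n, Nat.mod_lt _ hn⟩).1, a ∈ (r i).2 := by
    intro i a ha
    simp only [hrdef, Multiset.mem_singleton] at ha
    subst ha
    simp only [hrdef]
    split_ifs with h
    · have hmod : (i.1 + 1) % n = i.1 + 1 := Nat.mod_eq_of_lt h
      simp [hmod]
    · have hi : i.1 + 1 = n := by omega
      have hmod : (i.1 + 1) % n = 0 := by simp [hi]
      have h0 : L.get ⟨(i.1 + 1) % n, Nat.mod_lt _ hn⟩ = b := by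
        rw [show (⟨(i.1 + 1) % n, Nat.mod_lt _ hn⟩ : Fin L.length)
            = ⟨0, hn⟩ from by simp [Fin.ext_iff, hmod]]
        simp [hL]
      rw [h0]
      exact hb
  have hcard := h3 n hn r h1 h2 ⟨n - 1, by omega⟩
  have h2' : (r ⟨n - 1, by omega⟩).2 = P := by
    simp only [hrdef]
    rw [dif_neg (by omega)]
  rw [h2'] at hcard
  obtain ⟨c, hc⟩ := Multiset.card_eq_one.mp hcard
  rw [hc] at hb ⊢
  rw [Multiset.mem_singleton.mp hb]

lemma map_split {α β : Type*} {f : α → β} :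
    ∀ (P Q : Multiset β) (m : Multiset α), m.map f = P + Q →
      ∃ m1 m2, m = m1 + m2 ∧ m1.map f = P ∧ m2.map f = Q := by
  intro P
  induction P using Multiset.induction with
  | empty => exact fun Q m h => ⟨0, m, by simp, by simp, by simpa using h⟩
  | cons a P ih =>
    intro Q m h
    have ha : a ∈ m.map f := by rw [h]; simp
    obtain ⟨p, hp, hfp⟩ := Multiset.mem_map.mp ha
    obtain ⟨m', rfl⟩ := Multiset.exists_cons_of_mem hp
    rw [Multiset.map_cons, hfp, Multiset.cons_add] at h
    obtain ⟨m1, m2, rfl, h1, h2⟩ := ih Q m' ((Multiset.cons_inj_right a).mp h)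
    exact ⟨p ::ₘ m1, m2, by rw [Multiset.cons_add],
      by rw [Multiset.map_cons, hfp, h1], h2⟩

/-- Multiset version of "F is a fate of the multiset M". -/
def MF (R : Set (Rxn C)) (M : Multiset C) (F : Multiset (Set C)) : Prop :=
  ∃ m : Multiset (C × Multiset (Set C)),
    M = m.map Prod.fst ∧ F = (m.map Prod.snd).sum ∧ ∀ p ∈ m, Fate R p.1 p.2

lemma fate_of_MF_singleton {R : Set (Rxn C)} {b : C} {F : Multiset (Set C)}
    (h : MF R ({b} : Multiset C) F) : Fate R b F := by
  obtain ⟨m, hm1, hm2, hm3⟩ := h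
  have hc : Multiset.card m = 1 := by
    have := congrArg Multiset.card hm1
    simpa using this.symm
  obtain ⟨p, rfl⟩ := Multiset.card_eq_one.mp hc
  simp only [Multiset.map_singleton, Multiset.sum_singleton] at hm1 hm2
  have hp1 : p.1 = b := by
    have := hm1.symm
    rwa [Multiset.singleton_inj] at this
  rw [hm2, ← hp1]
  exact hm3 p (Multiset.mem_singleton_self p)

/-- Key lemma: if ({x}, P) ∈ R is a fast reaction and F is a fate of P,
then F is a fate of x. -/
lemma fate_of_reaction {R : Set (Rxn C)} (hne : NonemptyRxns R) (h3 : Prop3 R)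
    {x : C} {P : Multiset C} (hr : ((({x} : Multiset C), P) : Rxn C) ∈ R)
    {F : Multiset (Set C)} (hmf : MF R P F) : Fate R x F := by
  by_cases hres : IsRestingSet R (scc R x)
  · -- scc x resting: all products stay, so P = {b} with b ∈ scc x
    have hPne : P ≠ 0 := (hne _ hr).2
    have hall : ∀ b ∈ P, b ∈ scc R x := by
      intro b hb
      refine hres.2 _ hr (by simp) ?_ b hb
      intro a ha
      rw [Multiset.mem_singleton.mp ha]
      exact scc_self R x
    obtain ⟨b, hb⟩ := Multiset.exists_mem_of_ne_zero hPne
    have hbscc := hall b hb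
    have hP : P = {b} := prop3_singleton h3 hr hb hbscc.2
    rw [hP] at hmf
    have hfb : Fate R b F := fate_of_MF_singleton hmf
    have hsccb : scc R b = scc R x := scc_eq_of_mem hbscc
    have hresb : IsRestingSet R (scc R b) := by rw [hsccb]; exact hres
    have hFeq : F = {scc R b} := fate_resting_unique hresb hfb
    rw [hFeq, hsccb]
    exact Fate.resting x hres
  · by_cases hout : ∃ b ∈ P, b ∉ scc R x
    · obtain ⟨m, hm1, hm2, hm3⟩ := hmf
      set l : List (C × Multiset (Set C)) := m.toList with hl
      have hml : (↑l : Multiset (C × Multiset (Set C))) = m := m.coe_toList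
      have hfst : (↑(l.map Prod.fst) : Multiset C) = P := by
        rw [← Multiset.map_coe, hml, ← hm1]
      have hr' : ((({x} : Multiset C), (↑(l.map Prod.fst) : Multiset C)) : Rxn C) ∈ R := by
        rw [hfst]; exact hr
      have hout' : ∃ b ∈ l.map Prod.fst, b ∉ scc R x := by
        obtain ⟨b, hb, hbn⟩ := hout
        refine ⟨b, ?_, hbn⟩
        rw [← Multiset.mem_coe, hfst]
        exact hb
      have hf' : ∀ p ∈ l, Fate R p.1 p.2 := by
        intro p hp
        exact hm3 p (by rw [← hml]; exact Multiset.mem_coe.mpr hp)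
      have hFeq : F = (l.map Prod.snd).sum := by
        rw [hm2, ← hml, Multiset.map_coe, Multiset.sum_coe]
      rw [hFeq]
      exact Fate.step x x l hres (scc_self R x) hr' hout' hf'
    · push_neg at hout
      have hPne : P ≠ 0 := (hne _ hr).2
      obtain ⟨b, hb⟩ := Multiset.exists_mem_of_ne_zero hPne
      have hbscc := hout b hb
      have hP : P = {b} := prop3_singleton h3 hr hb hbscc.2
      rw [hP] at hmf
      have hfb : Fate R b F := fate_of_MF_singleton hmf
      exact fate_congr (scc_eq_of_mem hbscc).symm hfb

end Aux

/-- Lemma 2 (Fast transitions map to fates): assuming Property 3, every fast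
transition from {x} to a multiset B of resting complexes corresponds to a fate
F of x with B ~ F. -/
theorem fast_transition_to_fate {C : Type*} [Fintype C] (R : Set (Rxn C))
    (hRfin : R.Finite) (hne : NonemptyRxns R) (hfs : FastOrSlow R) (h3 : Prop3 R)
    (x : C) (B : Multiset C)
    (hT : FastTransition R ({x} : Multiset C) B)
    (hB : ∀ b ∈ B, RestingComplex R b) :
    ∃ F : Multiset (Set C), Fate R x F ∧ Represents B F := by
  suffices h : ∀ M, FastTransition R M B → ∃ F, MF R M F ∧ Represents B F by
    obtain ⟨F, hmf, hrep⟩ := h {x} hT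
    exact ⟨F, fate_of_MF_singleton hmf, hrep⟩
  intro M hM
  induction hM using Relation.ReflTransGen.head_induction_on with
  | refl =>
    refine ⟨B.map (scc R), ⟨B.map (fun b => (b, ({scc R b} : Multiset (Set C)))), ?_, ?_, ?_⟩, ?_⟩
    · simp [Multiset.map_map, Function.comp]
    · rw [Multiset.map_map]
      have : (Prod.snd ∘ fun b => (b, ({scc R b} : Multiset (Set C))))
          = (fun Q => ({Q} : Multiset (Set C))) ∘ scc R := rfl
      rw [this, ← Multiset.map_map, Multiset.sum_map_singleton]
    · intro p hp
      obtain ⟨b, hb, rfl⟩ := Multiset.mem_map.mp hp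
      obtain ⟨Q, hQ, hbQ⟩ := hB b hb
      obtain ⟨y, rfl⟩ := hQ.1
      have hsccb : scc R b = scc R y := scc_eq_of_mem hbQ
      have hresb : IsRestingSet R (scc R b) := by rw [hsccb]; exact hQ
      exact Fate.resting b hresb
    · rw [Represents, Multiset.rel_map_right]
      exact Multiset.rel_refl_of_refl_on (fun b _ => scc_self R b)
  | head hstep htail ih =>
    obtain ⟨F, ⟨m, hm1, hm2, hm3⟩, hrep⟩ := ih
    obtain ⟨y, P, M', hry, hMeq, hNeq⟩ := hstep
    rw [hNeq] at hm1
    obtain ⟨m1, m2, rfl, hmap1, hmap2⟩ := map_split P M' m hm1.symm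
    have hmfP : MF R P ((m1.map Prod.snd).sum) := ⟨m1, hmap1.symm, rfl, fun p hp =>
      hm3 p (Multiset.mem_add.mpr (Or.inl hp))⟩
    have hfy : Fate R y ((m1.map Prod.snd).sum) := fate_of_reaction hne h3 hry hmfP
    refine ⟨F, ⟨(y, (m1.map Prod.snd).sum) ::ₘ m2, ?_, ?_, ?_⟩, hrep⟩
    · rw [hMeq, Multiset.map_cons, hmap2]
    · rw [hm2, Multiset.map_cons, Multiset.sum_cons, Multiset.map_add, Multiset.sum_add]
    · intro p hp
      rcases Multiset.mem_cons.mp hp with h | h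
      · rw [h]; exact hfy
      · exact hm3 p (Multiset.mem_add.mpr (Or.inr h))
end

section
/- Assume Property 3. Resting sets are closed under fast transitions: if Q is a resting set, x ∈ Q, and there is a fast transition from the singleton multiset {x} to a multiset B, then B is a singleton multiset {y} with y ∈ Q. -/
variable {C : Type*}

lemma chain_of_reach {R : Set (Rxn C)} {p y : C} (h : Reach R p y) :
    ∃ c : List C, c ≠ [] ∧ List.Chain' (FastEdge R) c ∧ c.head? = some p ∧
      c.getLast? = some y := by
  induction h using Relation.ReflTransGen.head_induction_on with
  | refl => exact ⟨[y], by simp, List.isChain_singleton y, by simp, by simp⟩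
  | @head a b hab _ ih =>
    obtain ⟨c, hc0, hc1, hc2, hc3⟩ := ih
    refine ⟨a :: c, by simp, ?_, by simp, ?_⟩
    · show List.IsChain (FastEdge R) (a :: c)
      rw [List.isChain_cons]
      refine ⟨?_, hc1⟩
      intro z hz
      rw [hc2] at hz
      simp at hz
      exact hz ▸ hab
    · cases c with
      | nil => exact absurd rfl hc0
      | cons d t => rw [List.getLast?_cons_cons]; exact hc3

lemma products_card_one {R : Set (Rxn C)} (h3 : Prop3 R) {y : C} {P : Multiset C}
    (hr : ((({y} : Multiset C), P) : Rxn C) ∈ R) {p : C} (hp : p ∈ P)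
    (hreach : Reach R p y) : P.card = 1 := by
  obtain ⟨c, hc0, hc1, hc2, hc3⟩ := chain_of_reach hreach
  have hnpos : 0 < c.length := List.length_pos_iff.mpr hc0
  set n := c.length with hn
  have hp0 : c.get ⟨0, hnpos⟩ = p := by
    cases c with
    | nil => exact absurd rfl hc0
    | cons d t => simpa using hc2
  have hlast : c.get ⟨n - 1, by omega⟩ = y := by
    have h1 : c.getLast hc0 = y := by
      rw [List.getLast?_eq_getLast hc0] at hc3
      exact Option.some_injective _ hc3
    rw [← h1, List.getLast_eq_getElem]; rfl
  have hedge : ∀ (i : ℕ) (h : i + 1 < n),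
      FastEdge R (c.get ⟨i, by omega⟩) (c.get ⟨i + 1, h⟩) :=
    fun i h => List.isChain_iff_getElem.mp hc1 i (by omega)
  have getcongr : ∀ (i j : ℕ) (hi : i < n) (hj : j < n), i = j →
      c.get ⟨i, hi⟩ = c.get ⟨j, hj⟩ := by
    rintro i j hi hj rfl; rfl
  set r : Fin n → Rxn C := fun i =>
    if h : i.1 = 0 then (({y} : Multiset C), P)
    else ((({c.get ⟨i.1 - 1, by omega⟩} : Multiset C),
      ({c.get ⟨i.1, i.2⟩} : Multiset C)) : Rxn C) with hrdef
  have cond1 : ∀ i, r i ∈ R ∧ (r i).1.card = 1 := by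
    intro i
    by_cases h : i.1 = 0
    · simp only [hrdef, h, dif_pos]
      exact ⟨hr, by simp⟩
    · simp only [hrdef, dif_neg h]
      refine ⟨?_, by simp⟩
      have h2 := hedge (i.1 - 1) (by omega)
      rwa [getcongr (i.1 - 1 + 1) i.1 (by omega) i.2 (by omega)] at h2
  have cond2 : ∀ i : Fin n, ∀ a ∈ (r ⟨(i.1 + 1) % n, Nat.mod_lt _ hnpos⟩).1,
      a ∈ (r i).2 := by
    intro i a ha
    by_cases hi1 : i.1 + 1 < n
    · have hmod : (i.1 + 1) % n = i.1 + 1 := Nat.mod_eq_of_lt hi1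
      simp only [hrdef, hmod] at ha
      rw [dif_neg (by omega : ¬ i.1 + 1 = 0)] at ha
      simp only [Multiset.mem_singleton] at ha
      have hared : a = c.get ⟨i.1, i.2⟩ := by
        rw [ha]; exact getcongr _ _ _ _ (by omega)
      by_cases h : i.1 = 0
      · simp only [hrdef, h, dif_pos]
        have : a = p := by rw [hared, ← hp0]; exact getcongr _ _ _ _ h
        exact this ▸ hp
      · simp only [hrdef, dif_neg h]
        simp [hared]
    · have hin : i.1 + 1 = n := by omega
      have hmod : (i.1 + 1) % n = 0 := by rw [hin]; exact Nat.mod_self n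
      simp only [hrdef, hmod, dif_pos] at ha
      simp only [Multiset.mem_singleton] at ha
      by_cases h : i.1 = 0
      · -- n = 1, so c = [p] and y = p
        simp only [hrdef, h, dif_pos]
        have hyp : y = p := by
          rw [← hlast, ← hp0]; exact getcongr _ _ _ _ (by omega)
        rw [ha, hyp]; exact hp
      · simp only [hrdef, dif_neg h]
        have : c.get ⟨i.1, i.2⟩ = y := by
          rw [← hlast]; exact getcongr _ _ _ _ (by omega)
        simp only [ha, Multiset.mem_singleton]
        exact this.symm
  have := h3 n hnpos r cond1 cond2 ⟨0, hnpos⟩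
  simpa [hrdef] using this

/-- Assuming Property 3, resting sets are closed under fast transitions: a fast
transition starting from a single complex in a resting set Q ends in a single
complex of Q. -/
theorem restingSet_closed_under_fast_transitions {C : Type*} [Fintype C]
    (R : Set (Rxn C)) (hRfin : R.Finite) (hne : NonemptyRxns R) (h3 : Prop3 R)
    (Q : Set C) (hQ : IsRestingSet R Q) (x : C) (hx : x ∈ Q)
    (B : Multiset C) (hT : FastTransition R ({x} : Multiset C) B) :
    ∃ y ∈ Q, B = ({y} : Multiset C) := by
  obtain ⟨⟨x0, hQeq⟩, hQclosed⟩ := hQ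
  induction hT with
  | refl => exact ⟨x, hx, rfl⟩
  | tail _ hstep ih =>
    obtain ⟨z, hz, hbz⟩ := ih
    obtain ⟨w, P, M', hwR, hbw, hN⟩ := hstep
    rw [hbz] at hbw
    have hM' : M' = 0 := by
      have := congrArg Multiset.card hbw
      simp at this
      first | exact this | exact this.symm
    subst hM'
    have hwz : w = z := by
      rw [Multiset.cons_zero] at hbw
      exact (Multiset.singleton_inj.mp hbw).symm
    subst hwz
    -- all products of ({w}, P) are in Q
    have hPQ : ∀ b ∈ P, b ∈ Q := by
      intro b hb
      exact hQclosed ({w}, P) hwR (by simp) (by simp [hz]) b hb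
    have hPne : P ≠ 0 := (hne _ hwR).2
    obtain ⟨p, hp⟩ := Multiset.exists_mem_of_ne_zero hPne
    have hpQ : p ∈ Q := hPQ p hp
    have hreach : Reach R p w := by
      rw [hQeq] at hpQ hz
      exact Relation.ReflTransGen.trans hpQ.2 hz.1
    have hcard : P.card = 1 := products_card_one h3 hwR hp hreach
    obtain ⟨q, hq⟩ := Multiset.card_eq_one.mp hcard
    have hpq : p = q := by rw [hq] at hp; simpa using hp
    exact ⟨p, hpQ, by rw [hN, hq, hpq]; simp⟩
end

section
/- Let L ≥ 1 and let Q be an L × L real matrix with nonnegative entries such that every row sum of Q is at most 1, at least one row sum of Q is strictly less than 1, and the directed graph on {1, …, L} with an edge i → j whenever Q_{ij} > 0 is strongly connected. Then I_L − Q is invertible, Q^k tends to the zero matrix as k → ∞, and the series Σ_{k=0}^∞ Q^k converges to (I_L − Q)^{-1} (the fundamental matrix). -/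
open Filter

/-- For a substochastic, irreducible L × L matrix Q with some row sum strictly less
than 1: I − Q is invertible, Qᵏ → 0, and the series Σₖ Qᵏ converges to (I − Q)⁻¹. -/
theorem fundamental_matrix (L : ℕ) (hL : 1 ≤ L) (Q : Matrix (Fin L) (Fin L) ℝ)
    (hnn : ∀ i j, 0 ≤ Q i j)
    (hrow : ∀ i, ∑ j, Q i j ≤ 1)
    (hlt : ∃ i, ∑ j, Q i j < 1)
    (hsc : ∀ i j : Fin L, Relation.ReflTransGen (fun a b => 0 < Q a b) i j) :
    IsUnit (1 - Q) ∧
    Tendsto (fun k : ℕ => Q ^ k) atTop (nhds 0) ∧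
    Tendsto (fun m : ℕ => ∑ k ∈ Finset.range (m + 1), Q ^ k) atTop
      (nhds (1 - Q)⁻¹) := by
  have : NeZero L := ⟨by omega⟩
  -- row sums of powers
  set s : ℕ → Fin L → ℝ := fun k i => ∑ j, (Q ^ k) i j with hs
  -- nonnegativity of entries of powers
  have hpnn : ∀ k i j, 0 ≤ (Q ^ k) i j := by
    intro k
    induction k with
    | zero => intro i j; simp [Matrix.one_apply]; positivity
    | succ k ih =>
      intro i j
      rw [pow_succ, Matrix.mul_apply]
      exact Finset.sum_nonneg fun l _ => mul_nonneg (ih i l) (hnn l j)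
  have hsnn : ∀ k i, 0 ≤ s k i := fun k i =>
    Finset.sum_nonneg fun j _ => hpnn k i j
  have hs0 : ∀ i, s 0 i = 1 := by
    intro i; simp [hs, Matrix.one_apply]
  -- row sum of a product of powers
  have hprod : ∀ a b i, s (a + b) i = ∑ l, (Q ^ a) i l * s b l := by
    intro a b i
    simp only [hs, pow_add, Matrix.mul_apply]
    rw [Finset.sum_comm]
    simp [Finset.mul_sum]
  -- row sums ≤ 1
  have hsle : ∀ k i, s k i ≤ 1 := by
    intro k
    induction k with
    | zero => intro i; rw [hs0]
    | succ k ih =>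
      intro i
      have : s (1 + k) i ≤ 1 := by
        rw [hprod 1 k i]
        calc ∑ l, (Q ^ 1) i l * s k l ≤ ∑ l, (Q ^ 1) i l * 1 := by
              refine Finset.sum_le_sum fun l _ => ?_
              exact mul_le_mul_of_nonneg_left (ih l) (hpnn 1 i l)
          _ ≤ 1 := by simpa using hrow i
      simpa [Nat.add_comm] using this
  -- row sums antitone in k
  have hanti : ∀ i, Antitone (fun k => s k i) := by
    intro i
    refine antitone_nat_of_succ_le fun k => ?_
    have : s (k + 1) i ≤ s k i := by
      rw [hprod k 1 i]
      calc ∑ l, (Q ^ k) i l * s 1 l ≤ ∑ l, (Q ^ k) i l * 1 := by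
            refine Finset.sum_le_sum fun l _ => ?_
            exact mul_le_mul_of_nonneg_left (hsle 1 l) (hpnn k i l)
        _ = s k i := by simp [hs]
    exact this
  -- strict deficiency propagates backwards along edges
  have hstep : ∀ i b k, 0 < Q i b → s k b < 1 → s (k + 1) i < 1 := by
    intro i b k hib hb
    have : s (1 + k) i < 1 := by
      rw [hprod 1 k i]
      have h1 : ∑ l, (Q ^ 1) i l * s k l < ∑ l, (Q ^ 1) i l := by
        refine Finset.sum_lt_sum (fun l _ => ?_) ⟨b, Finset.mem_univ _, ?_⟩
        · nlinarith [hpnn 1 i l, hsle k l, hsnn k l]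
        · have : (Q ^ 1) i b = Q i b := by simp
          rw [this]
          nlinarith [hsnn k b]
      have h2 : ∑ l, (Q ^ 1) i l ≤ 1 := by simpa using hrow i
      linarith
    simpa [Nat.add_comm] using this
  -- every state eventually deficient
  obtain ⟨i₀, hi₀⟩ := hlt
  have hdef : ∀ i, ∃ n, s n i < 1 := by
    intro i
    induction hsc i i₀ using Relation.ReflTransGen.head_induction_on with
    | refl => exact ⟨1, by simpa [hs] using hi₀⟩
    | head hab _ ih =>
      obtain ⟨n, hn⟩ := ih
      exact ⟨n + 1, hstep _ _ n hab hn⟩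
  choose f hf using hdef
  set N : ℕ := Finset.univ.sup f with hN
  have hsN : ∀ i, s N i < 1 := fun i =>
    lt_of_le_of_lt (hanti i (Finset.le_sup (Finset.mem_univ i))) (hf i)
  have hNpos : 0 < N := by
    rcases Nat.eq_zero_or_pos N with h | h
    · exfalso; have := hsN i₀; rw [h, hs0] at this; exact lt_irrefl 1 this
    · exact h
  -- the contraction factor
  have hne : (Finset.univ : Finset (Fin L)).Nonempty := Finset.univ_nonempty
  set r : ℝ := Finset.univ.sup' hne (fun i => s N i) with hr
  have hrlt : r < 1 := (Finset.sup'_lt_iff hne).mpr fun i _ => hsN i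
  have hrle : ∀ i, s N i ≤ r := fun i => Finset.le_sup' _ (Finset.mem_univ i)
  have hr0 : 0 ≤ r := le_trans (hsnn N ⟨0, by omega⟩) (hrle ⟨0, by omega⟩)
  -- geometric decay of row sums
  have hgeo : ∀ k i, s (k * N) i ≤ r ^ k := by
    intro k
    induction k with
    | zero => intro i; simp [hs0]
    | succ k ih =>
      intro i
      have : s (N + k * N) i ≤ r ^ (k + 1) := by
        rw [hprod N (k * N) i]
        calc ∑ l, (Q ^ N) i l * s (k * N) l
            ≤ ∑ l, (Q ^ N) i l * r ^ k := by
              refine Finset.sum_le_sum fun l _ => ?_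
              exact mul_le_mul_of_nonneg_left (ih l) (hpnn N i l)
          _ = s N i * r ^ k := by rw [← Finset.sum_mul]
          _ ≤ r * r ^ k := mul_le_mul_of_nonneg_right (hrle i) (pow_nonneg hr0 k)
          _ = r ^ (k + 1) := by ring
      calc s ((k + 1) * N) i = s (N + k * N) i := by ring_nf
        _ ≤ r ^ (k + 1) := this
  -- entrywise bound
  have hbound : ∀ k i j, (Q ^ k) i j ≤ r ^ (k / N) := by
    intro k i j
    have h1 : (Q ^ k) i j ≤ s k i :=
      Finset.single_le_sum (fun j _ => hpnn k i j) (Finset.mem_univ j)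
    have h2 : s k i ≤ s (k / N * N) i := hanti i (Nat.div_mul_le_self k N)
    exact le_trans h1 (le_trans h2 (hgeo (k / N) i))
  -- Q^k → 0
  have hpow0 : Tendsto (fun k : ℕ => Q ^ k) atTop (nhds 0) := by
    rw [show (0 : Matrix (Fin L) (Fin L) ℝ) = fun _ _ => (0 : ℝ) from rfl]
    refine tendsto_pi_nhds.mpr fun i => tendsto_pi_nhds.mpr fun j => ?_
    have hg : Tendsto (fun k : ℕ => r ^ (k / N)) atTop (nhds 0) := by
      refine (tendsto_pow_atTop_nhds_zero_of_lt_one hr0 hrlt).comp ?_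
      refine tendsto_atTop_atTop.mpr fun b => ⟨b * N, fun k hk => ?_⟩
      exact (Nat.le_div_iff_mul_le hNpos).mpr hk
    exact squeeze_zero (fun k => hpnn k i j) (fun k => hbound k i j) hg
  -- invertibility: no nonzero kernel vector
  have hdet : IsUnit (1 - Q).det := by
    rw [isUnit_iff_ne_zero]
    intro hd
    obtain ⟨v, hvne, hv⟩ := (Matrix.exists_mulVec_eq_zero_iff).mpr hd
    have hQv : Q.mulVec v = v := by
      have h : (1 - Q).mulVec v = v - Q.mulVec v := by
        rw [Matrix.sub_mulVec, Matrix.one_mulVec]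
      rw [h] at hv
      exact (sub_eq_zero.mp hv).symm
    have hQNv : ∀ k, (Q ^ k).mulVec v = v := by
      intro k
      induction k with
      | zero => simp [Matrix.one_mulVec]
      | succ k ih =>
        rw [pow_succ, ← Matrix.mulVec_mulVec, hQv, ih]
    obtain ⟨i, _, hi⟩ := Finset.exists_max_image Finset.univ (fun i => |v i|)
      Finset.univ_nonempty
    have hMpos : 0 < |v i| := by
      obtain ⟨j, hj⟩ := Function.ne_iff.mp hvne
      exact lt_of_lt_of_le (abs_pos.mpr hj) (hi j (Finset.mem_univ j))
    have hvi : v i = ∑ j, (Q ^ N) i j * v j := by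
      conv_lhs => rw [← hQNv N]
      rfl
    have hle : |v i| ≤ r * |v i| := by
      calc |v i| = |∑ j, (Q ^ N) i j * v j| := by rw [← hvi]
        _ ≤ ∑ j, |(Q ^ N) i j * v j| := Finset.abs_sum_le_sum_abs _ _
        _ = ∑ j, (Q ^ N) i j * |v j| := by
            refine Finset.sum_congr rfl fun j _ => ?_
            rw [abs_mul, abs_of_nonneg (hpnn N i j)]
        _ ≤ ∑ j, (Q ^ N) i j * |v i| := by
            refine Finset.sum_le_sum fun j _ => ?_
            exact mul_le_mul_of_nonneg_left (hi j (Finset.mem_univ j)) (hpnn N i j)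
        _ = s N i * |v i| := by rw [← Finset.sum_mul]
        _ ≤ r * |v i| := mul_le_mul_of_nonneg_right (hrle i) (le_of_lt hMpos)
    nlinarith
  have hunit : IsUnit (1 - Q) := (Matrix.isUnit_iff_isUnit_det _).mpr hdet
  refine ⟨hunit, hpow0, ?_⟩
  -- partial sums formula
  have hS : ∀ m : ℕ, ∑ k ∈ Finset.range (m + 1), Q ^ k
      = (1 - Q ^ (m + 1)) * (1 - Q)⁻¹ := by
    intro m
    have h1 : (∑ k ∈ Finset.range (m + 1), Q ^ k) * (1 - Q) = 1 - Q ^ (m + 1) := by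
      have := geom_sum_mul Q (m + 1)
      calc (∑ k ∈ Finset.range (m + 1), Q ^ k) * (1 - Q)
          = -((∑ k ∈ Finset.range (m + 1), Q ^ k) * (Q - 1)) := by
            rw [← neg_sub Q 1, mul_neg]
        _ = -(Q ^ (m + 1) - 1) := by rw [this]
        _ = 1 - Q ^ (m + 1) := by rw [neg_sub]
    calc ∑ k ∈ Finset.range (m + 1), Q ^ k
        = (∑ k ∈ Finset.range (m + 1), Q ^ k) * ((1 - Q) * (1 - Q)⁻¹) := by
          rw [Matrix.mul_nonsing_inv _ hdet, mul_one]
      _ = ((∑ k ∈ Finset.range (m + 1), Q ^ k) * (1 - Q)) * (1 - Q)⁻¹ := by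
          rw [mul_assoc]
      _ = (1 - Q ^ (m + 1)) * (1 - Q)⁻¹ := by rw [h1]
  have hcont : Continuous (fun X : Matrix (Fin L) (Fin L) ℝ => (1 - X) * (1 - Q)⁻¹) :=
    (continuous_const.sub continuous_id).matrix_mul continuous_const
  have h2 : Tendsto (fun m : ℕ => Q ^ (m + 1)) atTop (nhds 0) :=
    hpow0.comp (tendsto_add_atTop_nat 1)
  have h3 := (hcont.tendsto 0).comp h2
  simp only [Function.comp, sub_zero, one_mul] at h3
  have h4 : Tendsto (fun m : ℕ => (1 - Q ^ (m + 1)) * (1 - Q)⁻¹) atTop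
      (nhds (1 - Q)⁻¹) := h3
  exact h4.congr fun m => (hS m).symm
end
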